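/- There exists a constant d > 0 such that for all real numbers a, b, λ, setting σ = (1 + 4a²)^{-1/2}, one has ∫_{−∞}^{−λ} Φ(a·x + b)·φ(x) dx ≥ d²·σ·exp(−2b² − λ²/σ²), and likewise ∫_{−λ}^{+∞} Φ(a·x + b)·φ(x) dx ≥ d²·σ·exp(−2b² − λ²/σ²). -/

import Mathlib

open MeasureTheory Real

/-- The standard normal density `φ(x) = (2π)^{-1/2} exp(−x²/2)`. -/
noncomputable def stdNormalPDF (x : ℝ) : ℝ :=
  (Real.sqrt (2 * Real.pi))⁻¹ * Real.exp (-x ^ 2 / 2)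

/-- The standard normal distribution function `Φ(x) = ∫_{−∞}^x φ(u) du`. -/
noncomputable def stdNormalCDF (x : ℝ) : ℝ :=
  ∫ u in Set.Iic x, stdNormalPDF u

lemma pdf_nonneg (x : ℝ) : 0 ≤ stdNormalPDF x := by
  unfold stdNormalPDF; positivity

lemma pdf_integrable : Integrable stdNormalPDF := by
  have h := (integrable_exp_neg_mul_sq (by norm_num : (0:ℝ) < 1/2)).const_mul (Real.sqrt (2 * Real.pi))⁻¹
  refine h.congr ?_
  filter_upwards with x
  unfold stdNormalPDF; congr 1; ring_nf

lemma interval_lb {f : ℝ → ℝ} (hf : Integrable f) (hnn : ∀ x, 0 ≤ f x)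
    {p q m : ℝ} (hpq : p ≤ q) (hm : ∀ x ∈ Set.Icc p q, m ≤ f x)
    {s : Set ℝ} (hsub : Set.Icc p q ⊆ s) :
    (q - p) * m ≤ ∫ x in s, f x := by
  have h1 : (q - p) * m ≤ ∫ x in Set.Icc p q, f x := by
    have hc : IntegrableOn (fun _ : ℝ => m) (Set.Icc p q) := by
      refine integrableOn_const (lt_top_iff_ne_top.1 ?_)
      exact measure_Icc_lt_top
    have := setIntegral_mono_on hc hf.integrableOn measurableSet_Icc hm
    rwa [setIntegral_const, measureReal_def, Real.volume_Icc, ENNReal.toReal_ofReal (by linarith), smul_eq_mul] at this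
  have h2 : (∫ x in Set.Icc p q, f x) ≤ ∫ x in s, f x :=
    setIntegral_mono_set hf.integrableOn (ae_of_all _ hnn) (HasSubset.Subset.eventuallyLE hsub)
  linarith

lemma cdf_nonneg (t : ℝ) : 0 ≤ stdNormalCDF t :=
  setIntegral_nonneg measurableSet_Iic fun x _ => pdf_nonneg x

lemma cdf_le (t : ℝ) : stdNormalCDF t ≤ ∫ x, stdNormalPDF x :=
  setIntegral_le_integral pdf_integrable (ae_of_all _ pdf_nonneg)

lemma cdf_mono : Monotone stdNormalCDF := fun _ _ h =>
  setIntegral_mono_set pdf_integrable.integrableOn (ae_of_all _ pdf_nonneg)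
    (HasSubset.Subset.eventuallyLE (Set.Iic_subset_Iic.2 h))

lemma cdf_lb (t : ℝ) : (Real.sqrt (2 * Real.pi))⁻¹ * Real.exp (-(1 + t ^ 2)) ≤ stdNormalCDF t := by
  have key : ∀ x ∈ Set.Icc (t - 1) t,
      (Real.sqrt (2 * Real.pi))⁻¹ * Real.exp (-(1 + t ^ 2)) ≤ stdNormalPDF x := by
    rintro x ⟨h1, h2⟩
    unfold stdNormalPDF
    have hc : (0:ℝ) < (Real.sqrt (2 * Real.pi))⁻¹ := by positivity
    refine mul_le_mul_of_nonneg_left ?_ hc.le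
    refine Real.exp_le_exp.2 ?_
    nlinarith [sq_nonneg (x - t), sq_nonneg (x + t), sq_nonneg (t - 1), sq_nonneg (t + 1),
      mul_nonneg (sub_nonneg.2 h2) (by linarith : (0:ℝ) ≤ x - (t - 1))]
  have := interval_lb pdf_integrable pdf_nonneg (by linarith : t - 1 ≤ t) key
    (Set.Icc_subset_Iic_self)
  simpa [stdNormalCDF] using this

lemma pdf_continuous : Continuous stdNormalPDF := by
  unfold stdNormalPDF; fun_prop

set_option maxHeartbeats 1000000 in
/-- There is a constant `d > 0` such that for all reals `a, b, λ`, with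
`σ = (1 + 4a²)^{-1/2}`, one has
`∫_{−∞}^{−λ} Φ(a·x + b)·φ(x) dx ≥ d²·σ·exp(−2b² − λ²/σ²)`, and likewise for the
integral over `[−λ, ∞)`. -/
theorem stmt6 :
    ∃ d : ℝ, 0 < d ∧
      ∀ a b l : ℝ,
        (d ^ 2 * (Real.sqrt (1 + 4 * a ^ 2))⁻¹ *
            Real.exp (-2 * b ^ 2 - l ^ 2 / ((Real.sqrt (1 + 4 * a ^ 2))⁻¹) ^ 2)
          ≤ ∫ x in Set.Iic (-l), stdNormalCDF (a * x + b) * stdNormalPDF x) ∧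
        (d ^ 2 * (Real.sqrt (1 + 4 * a ^ 2))⁻¹ *
            Real.exp (-2 * b ^ 2 - l ^ 2 / ((Real.sqrt (1 + 4 * a ^ 2))⁻¹) ^ 2)
          ≤ ∫ x in Set.Ici (-l), stdNormalCDF (a * x + b) * stdNormalPDF x) := by
  set c : ℝ := (Real.sqrt (2 * Real.pi))⁻¹ with hc
  have hcpos : 0 < c := by positivity
  refine ⟨c * Real.exp (-(3:ℝ)/2), by positivity, ?_⟩
  intro a b l
  set d : ℝ := c * Real.exp (-(3:ℝ)/2) with hd
  set S : ℝ := 1 + 4 * a ^ 2 with hS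
  have hS1 : (1:ℝ) ≤ S := by nlinarith [sq_nonneg a]
  have hsqrt1 : (1:ℝ) ≤ Real.sqrt S := by
    rw [show (1:ℝ) = Real.sqrt 1 by simp]
    exact Real.sqrt_le_sqrt hS1
  set σ : ℝ := (Real.sqrt S)⁻¹ with hσ
  have hσpos : 0 < σ := by positivity
  have hσ1 : σ ≤ 1 := by
    rw [hσ]; exact inv_le_one_of_one_le₀ hsqrt1
  have hσsq : σ ^ 2 = S⁻¹ := by
    rw [hσ, ← Real.sqrt_inv, Real.sq_sqrt (by positivity)]
  have haσ : a ^ 2 * σ ^ 2 ≤ 1/4 := by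
    rw [hσsq]
    rw [mul_inv_le_iff₀ (by linarith)]
    nlinarith
  -- exponent rewrite
  have hexp : -2 * b ^ 2 - l ^ 2 / σ ^ 2 = -2 * b ^ 2 - l ^ 2 * S := by
    rw [hσsq]
    have hS0 : S ≠ 0 := by positivity
    field_simp
  -- the integrand
  set g : ℝ → ℝ := fun x => stdNormalCDF (a * x + b) * stdNormalPDF x with hg
  have hgnn : ∀ x, 0 ≤ g x := fun x => mul_nonneg (cdf_nonneg _) (pdf_nonneg x)
  have hgmeas : AEStronglyMeasurable g volume := by
    exact ((cdf_mono.measurable.comp ((measurable_id.const_mul a).add_const b)).mul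
      pdf_continuous.measurable).aestronglyMeasurable
  have hgint : Integrable g := by
    refine (pdf_integrable.const_mul (∫ x, stdNormalPDF x)).mono hgmeas (ae_of_all _ fun x => ?_)
    simp only [Real.norm_eq_abs]
    rw [abs_of_nonneg (hgnn x), abs_of_nonneg (mul_nonneg (integral_nonneg pdf_nonneg) (pdf_nonneg x))]
    · exact mul_le_mul_of_nonneg_right (cdf_le _) (pdf_nonneg x)
  have hσsq1 : σ ^ 2 ≤ 1 := by nlinarith
  have hd2 : d ^ 2 = c ^ 2 * Real.exp (-(3:ℝ)) := by
    rw [hd, mul_pow, sq (Real.exp _), ← Real.exp_add]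
    norm_num
  have key : ∀ x : ℝ, (x + l) ^ 2 ≤ σ ^ 2 →
      d ^ 2 * Real.exp (-2 * b ^ 2 - l ^ 2 * S) ≤ g x := by
    intro x hx
    have h1 : c * Real.exp (-(1 + (a * x + b) ^ 2)) ≤ stdNormalCDF (a * x + b) := cdf_lb _
    have h3 : c * Real.exp (-(1 + (a * x + b) ^ 2)) * (c * Real.exp (-x ^ 2 / 2)) ≤ g x :=
      mul_le_mul_of_nonneg_right h1 (by positivity)
    refine le_trans ?_ h3
    have h4 : c * Real.exp (-(1 + (a * x + b) ^ 2)) * (c * Real.exp (-x ^ 2 / 2))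
        = c ^ 2 * Real.exp (-(1 + (a * x + b) ^ 2) + -x ^ 2 / 2) := by
      rw [Real.exp_add]; ring
    have h5 : d ^ 2 * Real.exp (-2 * b ^ 2 - l ^ 2 * S)
        = c ^ 2 * Real.exp (-(3:ℝ) + (-2 * b ^ 2 - l ^ 2 * S)) := by
      rw [hd2, Real.exp_add]; ring
    rw [h4, h5]
    refine mul_le_mul_of_nonneg_left (Real.exp_le_exp.2 ?_) (sq_nonneg c)
    have hax : a ^ 2 * (x + l) ^ 2 ≤ a ^ 2 * σ ^ 2 :=
      mul_le_mul_of_nonneg_left hx (sq_nonneg a)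
    nlinarith [sq_nonneg (a * x - b), sq_nonneg (a * x + 2 * a * l), sq_nonneg (x + 2 * l),
      hax, haσ, hx, hσsq1]
  constructor
  · have happ1 := interval_lb hgint hgnn (show -l - σ ≤ -l by linarith)
      (fun x hx => key x (by obtain ⟨h1, h2⟩ := hx; nlinarith)) Set.Icc_subset_Iic_self
    rw [hexp]
    calc d ^ 2 * σ * Real.exp (-2 * b ^ 2 - l ^ 2 * S)
        = (-l - (-l - σ)) * (d ^ 2 * Real.exp (-2 * b ^ 2 - l ^ 2 * S)) := by ring
      _ ≤ _ := happ1
  · have happ2 := interval_lb hgint hgnn (show -l ≤ -l + σ by linarith)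
      (fun x hx => key x (by obtain ⟨h1, h2⟩ := hx; nlinarith)) Set.Icc_subset_Ici_self
    rw [hexp]
    calc d ^ 2 * σ * Real.exp (-2 * b ^ 2 - l ^ 2 * S)
        = (-l + σ - -l) * (d ^ 2 * Real.exp (-2 * b ^ 2 - l ^ 2 * S)) := by ring
      _ ≤ _ := happ2
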